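/- Let M be a connected, compact smooth manifold without boundary and let H ∈ C(T*M × ℝ) satisfy the convexity assumption (H1) and the monotonicity assumption (H3). Then the following two properties are equivalent: (1) there exists a constant r₀ > 0 such that H(x,p,−r₀) → +∞ as |p|_x → ∞, uniformly in x ∈ M; (2) H(x,p,0) → +∞ as |p|_x → ∞, uniformly in x ∈ M. -/

import Mathlib

open scoped Manifold Topology NNReal
open Set Filter MeasureTheory

noncomputable section

/-! ## General setup

`M` is a compact connected manifold without boundary, modelled on a real normed space `E`
(via charts), and equipped with a metric (playing the role of the Riemannian distance).
Cotangent vectors at a point are represented, through the model-space trivialization, as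
continuous linear functionals `E →L[ℝ] ℝ`, and tangent vectors as elements of `E`; the
fiberwise norms `|·|ₓ` are the norms of `E` and of `E →L[ℝ] ℝ`. -/

variable {E : Type*} [NormedAddCommGroup E] [NormedSpace ℝ E]
variable {M : Type*} [MetricSpace M] [ChartedSpace E M]

/-- The differential of a real function on `M`, seen as a cotangent vector via the
model-space trivialization. -/
def mgrad (φ : M → ℝ) (x : M) : E →L[ℝ] ℝ :=
  mfderiv 𝓘(ℝ, E) 𝓘(ℝ, ℝ) φ x

/-- The velocity of a curve in `M`, seen as a tangent vector via the trivialization. -/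
def curveDeriv (ξ : ℝ → M) (s : ℝ) : E :=
  mfderiv 𝓘(ℝ, ℝ) 𝓘(ℝ, E) ξ s (1 : ℝ)

/-- `u` is a viscosity subsolution of `Ham (x, Du(x), u(x)) = c` on `M`. -/
def IsSubsolution (Ham : M → (E →L[ℝ] ℝ) → ℝ → ℝ) (c : ℝ) (u : M → ℝ) : Prop :=
  ∀ φ : M → ℝ, ContMDiff 𝓘(ℝ, E) 𝓘(ℝ, ℝ) 1 φ → ∀ x₀ : M,
    (∀ x, u x ≤ φ x) → φ x₀ = u x₀ →
      Ham x₀ (mgrad φ x₀) (u x₀) ≤ c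

/-- `u` is a viscosity supersolution of `Ham (x, Du(x), u(x)) = c` on `M`. -/
def IsSupersolution (Ham : M → (E →L[ℝ] ℝ) → ℝ → ℝ) (c : ℝ) (u : M → ℝ) : Prop :=
  ∀ ψ : M → ℝ, ContMDiff 𝓘(ℝ, E) 𝓘(ℝ, ℝ) 1 ψ → ∀ x₀ : M,
    (∀ x, ψ x ≤ u x) → ψ x₀ = u x₀ →
      c ≤ Ham x₀ (mgrad ψ x₀) (u x₀)

/-- `u` is a viscosity solution of `Ham (x, Du(x), u(x)) = c` on `M`. -/
def IsSolution (Ham : M → (E →L[ℝ] ℝ) → ℝ → ℝ) (c : ℝ) (u : M → ℝ) : Prop :=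
  IsSubsolution Ham c u ∧ IsSupersolution Ham c u

/-- `c` is the critical value of the Hamiltonian `G = G (x, p)`: it is the unique constant
`c` such that `G (x, Du(x)) = c` admits a continuous viscosity solution. -/
def IsCriticalValue (G : M → (E →L[ℝ] ℝ) → ℝ) (c : ℝ) : Prop :=
  (∃ u : M → ℝ, Continuous u ∧ IsSolution (fun x p _ => G x p) c u) ∧
    ∀ c' : ℝ, (∃ u : M → ℝ, Continuous u ∧ IsSolution (fun x p _ => G x p) c' u) → c' = c

/-- The Lagrangian associated to `Ham` through the Legendre-Fenchel transform. -/
def Lag (Ham : M → (E →L[ℝ] ℝ) → ℝ → ℝ) (x : M) (v : E) (u : ℝ) : ℝ :=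
  ⨆ p : E →L[ℝ] ℝ, (p v - Ham x p u)

/-- The partial derivative `L_u (x, v, 0)` of the Lagrangian with respect to `u` at `u = 0`. -/
def Luz (Ham : M → (E →L[ℝ] ℝ) → ℝ → ℝ) (x : M) (v : E) : ℝ :=
  deriv (fun u => Lag Ham x v u) 0

/-- The (Fréchet) subdifferential of a convex function `f` at `v`. -/
def subdiff (f : E → ℝ) (v : E) : Set (E →L[ℝ] ℝ) :=
  {p | ∀ v', f v + p (v' - v) ≤ f v'}

/-- The action function `h_t(x,y)` of the Lagrangian `LG` with critical value `c`. -/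
def actionF (LG : M → E → ℝ) (c : ℝ) (t : ℝ) (x y : M) : ℝ :=
  sInf {a : ℝ | ∃ ξ : ℝ → M, (∃ K : ℝ≥0, LipschitzOnWith K ξ (Icc 0 t)) ∧
    ξ 0 = x ∧ ξ t = y ∧
    a = ∫ s in (0:ℝ)..t, (LG (ξ s) (curveDeriv ξ s) + c)}

/-- The Peierls barrier `h(x,y)` of the Lagrangian `LG` with critical value `c`. -/
def peierls (LG : M → E → ℝ) (c : ℝ) (x y : M) : ℝ :=
  liminf (fun t => actionF LG c t x y) atTop

/-- A curve `ξ : (-∞, 0] → M` with `ξ 0 = x`, Lipschitz, calibrated by `w` for the contact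
Lagrangian with discount factor `lam`. -/
def IsMinCurve (Ham : M → (E →L[ℝ] ℝ) → ℝ → ℝ) (c : ℝ) (lam : ℝ) (w : M → ℝ)
    (x : M) (ξ : ℝ → M) : Prop :=
  (∃ K : ℝ≥0, LipschitzOnWith K ξ (Iic 0)) ∧ ξ 0 = x ∧
    ∀ t : ℝ, 0 < t →
      w x = w (ξ (-t)) +
        ∫ τ in (-t)..(0:ℝ), (Lag Ham (ξ τ) (curveDeriv ξ τ) (lam * w (ξ τ)) + c)

/-- The exponential weight `e^{-λ ∫₀ˢ L_u(ξ(τ), ξ'(τ), 0) dτ}`. -/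
def wgt (Ham : M → (E →L[ℝ] ℝ) → ℝ → ℝ) (lam : ℝ) (ξ : ℝ → M) (s : ℝ) : ℝ :=
  Real.exp (-(lam * ∫ τ in (0:ℝ)..s, Luz Ham (ξ τ) (curveDeriv ξ τ)))

/-- The error term `Δ^λ_x(s)` in the first-order Taylor expansion of the Lagrangian. -/
def DeltaFn (Ham : M → (E →L[ℝ] ℝ) → ℝ → ℝ) (lam : ℝ) (w : M → ℝ) (ξ : ℝ → M) (s : ℝ) : ℝ :=
  Lag Ham (ξ s) (curveDeriv ξ s) (lam * w (ξ s)) - Lag Ham (ξ s) (curveDeriv ξ s) 0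
    - lam * w (ξ s) * Luz Ham (ξ s) (curveDeriv ξ s)

section Measures

variable [MeasurableSpace M] [BorelSpace M] [MeasurableSpace E] [BorelSpace E]

/-- A closed probability measure on the tangent bundle `TM ≃ M × E`. -/
def IsClosedMeasure (μ : Measure (M × E)) : Prop :=
  IsProbabilityMeasure μ ∧ Integrable (fun q : M × E => ‖q.2‖) μ ∧
    ∀ φ : M → ℝ, ContMDiff 𝓘(ℝ, E) 𝓘(ℝ, ℝ) 1 φ →
      ∫ q : M × E, (mgrad φ q.1 : E →L[ℝ] ℝ) q.2 ∂μ = 0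

/-- A Mather measure for the Lagrangian `LG` with critical value `c`: a closed probability
measure on `TM ≃ M × E` with `∫ LG dμ = -c` (the minimum over closed measures). -/
def IsMatherMeasure (LG : M → E → ℝ) (c : ℝ) (μ : Measure (M × E)) : Prop :=
  IsClosedMeasure μ ∧ ∫ q : M × E, LG q.1 q.2 ∂μ = -c

/-- The probability measure `μ̃ˣ_λ` on `TM ≃ M × E` associated to a minimizing curve `ξ`,
defined by the weighted-average formula (3.5). -/
def IsDiscountedMeasure (Ham : M → (E →L[ℝ] ℝ) → ℝ → ℝ) (lam : ℝ) (ξ : ℝ → M)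
    (μ : Measure (M × E)) : Prop :=
  IsProbabilityMeasure μ ∧
    ∀ f : BoundedContinuousFunction (M × E) ℝ,
      ∫ q, f q ∂μ =
        (∫ s in Iic (0:ℝ), f (ξ s, curveDeriv ξ s) * wgt Ham lam ξ s) /
          (∫ s in Iic (0:ℝ), wgt Ham lam ξ s)

end Measures


theorem statement16
    {E : Type*} [NormedAddCommGroup E] [NormedSpace ℝ E]
    {M : Type*} [MetricSpace M] [CompactSpace M] [ConnectedSpace M]
    [ChartedSpace E M] [IsManifold 𝓘(ℝ, E) (⊤ : ℕ∞) M]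
    (Ham : M → (E →L[ℝ] ℝ) → ℝ → ℝ)
    (hHcont : Continuous fun q : (M × (E →L[ℝ] ℝ)) × ℝ => Ham q.1.1 q.1.2 q.2)
    (hH1 : ∀ (x : M) (u : ℝ), ConvexOn ℝ Set.univ fun p : E →L[ℝ] ℝ => Ham x p u)
    (hH3 : ∀ (x : M) (p : E →L[ℝ] ℝ), StrictMono fun u => Ham x p u) :
    (∃ r₀ : ℝ, 0 < r₀ ∧ ∀ A : ℝ, ∃ R : ℝ, ∀ (x : M) (p : E →L[ℝ] ℝ),
      R ≤ ‖p‖ → A ≤ Ham x p (-r₀)) ↔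
    (∀ A : ℝ, ∃ R : ℝ, ∀ (x : M) (p : E →L[ℝ] ℝ), R ≤ ‖p‖ → A ≤ Ham x p 0) := by
  constructor
  · rintro ⟨r₀, hr₀, h⟩ A
    obtain ⟨R, hR⟩ := h A
    exact ⟨R, fun x p hp =>
      (hR x p hp).trans ((hH3 x p).monotone (by linarith : (-r₀ : ℝ) ≤ 0))⟩
  · intro h2
    -- E is finite dimensional (Riesz): M is a nonempty locally compact manifold on E
    haveI : Nonempty M := inferInstance
    haveI : Inhabited M := Classical.inhabited_of_nonempty ‹_›
    haveI : FiniteDimensional ℝ E :=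
      FiniteDimensional.of_locallyCompact_manifold (M := M) 𝓘(ℝ, E)
    haveI : ProperSpace (E →L[ℝ] ℝ) := inferInstance
    -- bound for Ham x 0 0
    obtain ⟨z, -, hz⟩ := isCompact_univ.exists_isMaxOn univ_nonempty
      ((hHcont.comp (by fun_prop :
        Continuous fun x : M => ((x, (0 : E →L[ℝ] ℝ)), (0:ℝ)))).continuousOn)
    simp only [isMaxOn_iff, mem_univ, forall_true_left, forall_const] at hz
    set C : ℝ := max (Ham z 0 0) 0 with hC
    have hC0 : 0 ≤ C := le_max_right _ _
    set B : ℝ := C + 2 with hB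
    obtain ⟨R₁, hR₁⟩ := h2 B
    set R₀ : ℝ := max R₁ 1 with hR₀def
    have hR₀pos : (0:ℝ) < R₀ := lt_of_lt_of_le one_pos (le_max_right _ _)
    -- uniform continuity on a compact set
    have hK : IsCompact ((((univ : Set M) ×ˢ Metric.closedBall (0 : E →L[ℝ] ℝ) R₀) ×ˢ
        Icc (-1:ℝ) 0)) :=
      (isCompact_univ.prod (isCompact_closedBall _ _)).prod isCompact_Icc
    have huc := hK.uniformContinuousOn_of_continuous hHcont.continuousOn
    rw [Metric.uniformContinuousOn_iff] at huc
    obtain ⟨δ, hδpos, hδ⟩ := huc 1 one_pos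
    set r₀ : ℝ := min (δ/2) 1 with hr₀def
    have hr₀pos : 0 < r₀ := lt_min (by linarith) one_pos
    have hr₀le1 : r₀ ≤ 1 := min_le_right _ _
    have hr₀ltδ : r₀ < δ := lt_of_le_of_lt (min_le_left _ _) (by linarith)
    -- key estimate on the sphere of radius R₀
    have key : ∀ (x : M) (q : E →L[ℝ] ℝ), ‖q‖ = R₀ → B - 1 ≤ Ham x q (-r₀) := by
      intro x q hq
      have hmem1 : ((x, q), -r₀) ∈ (((univ : Set M) ×ˢ Metric.closedBall (0 : E →L[ℝ] ℝ) R₀) ×ˢ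
          Icc (-1:ℝ) 0) := by
        refine ⟨⟨mem_univ _, ?_⟩, show (-r₀) ∈ Icc (-1:ℝ) 0 from
          mem_Icc.mpr ⟨by linarith, by linarith⟩⟩
        simp [Metric.mem_closedBall, dist_zero_right, hq]
      have hmem2 : ((x, q), (0:ℝ)) ∈ (((univ : Set M) ×ˢ Metric.closedBall (0 : E →L[ℝ] ℝ) R₀) ×ˢ
          Icc (-1:ℝ) 0) := by
        refine ⟨⟨mem_univ _, ?_⟩, show (0:ℝ) ∈ Icc (-1:ℝ) 0 from
          mem_Icc.mpr ⟨by linarith, le_refl _⟩⟩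
        simp [Metric.mem_closedBall, dist_zero_right, hq]
      have hdeq : dist (((x, q), -r₀) : (M × (E →L[ℝ] ℝ)) × ℝ) ((x, q), (0:ℝ)) = r₀ := by
        have h1 : dist (-r₀) (0:ℝ) = r₀ := by
          rw [Real.dist_eq, sub_zero, abs_neg, abs_of_nonneg hr₀pos.le]
        rw [Prod.dist_eq, Prod.dist_eq, h1, dist_self, dist_self, max_self,
          max_eq_right hr₀pos.le]
      have hdist : dist (((x, q), -r₀) : (M × (E →L[ℝ] ℝ)) × ℝ) ((x, q), (0:ℝ)) < δ := by
        rw [hdeq]; exact hr₀ltδ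
      have hcl := hδ _ hmem1 _ hmem2 hdist
      rw [Real.dist_eq, abs_lt] at hcl
      have hq0 : B ≤ Ham x q 0 := hR₁ x q (by rw [hq]; exact le_max_left _ _)
      simp only at hcl
      linarith [hcl.1]
    -- conclusion
    refine ⟨r₀, hr₀pos, fun A => ⟨max R₀ (R₀ * A), fun x p hp => ?_⟩⟩
    have hpR₀ : R₀ ≤ ‖p‖ := le_trans (le_max_left _ _) hp
    have hA' : R₀ * A ≤ ‖p‖ := le_trans (le_max_right _ _) hp
    have hppos : (0:ℝ) < ‖p‖ := lt_of_lt_of_le hR₀pos hpR₀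
    set t : ℝ := R₀ / ‖p‖ with ht
    have htpos : 0 < t := div_pos hR₀pos hppos
    have htle : t ≤ 1 := (div_le_one hppos).mpr hpR₀
    have hqnorm : ‖t • p‖ = R₀ := by
      have hns := norm_smul t p
      rw [hns, Real.norm_eq_abs, abs_of_pos htpos, ht,
        div_mul_cancel₀ _ (ne_of_gt hppos)]
    have hconv := (hH1 x (-r₀)).2 (mem_univ p) (mem_univ (0 : E →L[ℝ] ℝ))
      htpos.le (by linarith : (0:ℝ) ≤ 1 - t) (by ring)
    simp only [smul_zero, add_zero, smul_eq_mul] at hconv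
    have hkey := key x (t • p) hqnorm
    have h00 : Ham x 0 (-r₀) ≤ C := by
      refine le_trans (le_trans ((hH3 x 0).monotone (by linarith : (-r₀:ℝ) ≤ 0)) (hz x)) ?_
      exact le_max_left _ _
    have h1 : B - 1 ≤ t * Ham x p (-r₀) + (1 - t) * C := by
      refine le_trans hkey (le_trans hconv ?_)
      have := mul_le_mul_of_nonneg_left h00 (by linarith : (0:ℝ) ≤ 1 - t)
      linarith
    have h2' : t * C + 1 ≤ t * Ham x p (-r₀) := by
      have h1' := h1
      rw [hB] at h1'
      nlinarith [h1']
    have htA : t * A ≤ 1 := by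
      rw [ht, div_mul_eq_mul_div, div_le_one hppos, mul_comm] at *
      linarith [hA']
    have htH : (1:ℝ) ≤ t * Ham x p (-r₀) := by
      nlinarith [mul_nonneg htpos.le hC0]
    exact le_of_mul_le_mul_left (le_trans htA htH) htpos
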